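/- Let n ≥ 2r + s and let F be a family of r-subsets of [n] with |F| < C(n, r−s)/C(r, s). Then rk M_s^r(K_n^r − F) = C(n, s) over the rationals. -/

import Mathlib

/-- The higher inclusion matrix `M_s^r(G)` of the hypergraph on `Fin n` with edge set `E`. -/
def inclusionMatrix (n s : ℕ) (E : Finset (Finset (Fin n))) :
    Matrix {e : Finset (Fin n) // e ∈ E} {S : Finset (Fin n) // S.card = s} ℚ :=
  fun e S => if (S : Finset (Fin n)) ⊆ (e : Finset (Fin n)) then 1 else 0

open Finset


/-- one rung of the choose ladder: `C(n,k)*(n-k) = n*C(n-1,k)`. -/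
lemma ladder1 (n k : ℕ) (hn : 1 ≤ n) :
    n.choose k * (n - k) = n * ((n-1).choose k) := by
  have h1 := Nat.add_one_mul_choose_eq (n-1) k
  have hs : n - 1 + 1 = n := by omega
  rw [hs] at h1
  rw [Nat.choose_succ_right_eq] at h1
  exact h1.symm

/-- two rungs: `C(n,k)*(n-k)*(n-k-1) = n*(n-1)*C(n-2,k)`. -/
lemma ladder2 (n k : ℕ) (hn : k + 2 ≤ n) :
    n.choose k * ((n - k) * (n - k - 1)) = (n * (n-1)) * ((n-2).choose k) := by
  have h1 : n.choose k * (n - k) = n * ((n-1).choose k) := ladder1 n k (by omega)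
  have h2 : (n-1).choose k * ((n-1) - k) = (n-1) * ((n-2).choose k) := by
    have h := ladder1 (n-1) k (by omega)
    have h3 : n - 1 - 1 = n - 2 := by omega
    rw [h3] at h; exact h
  have h4 : (n - 1) - k = n - k - 1 := by omega
  rw [h4] at h2
  calc n.choose k * ((n - k) * (n - k - 1)) = (n.choose k * (n - k)) * (n - k - 1) := by ring
    _ = n * ((n-1).choose k) * (n-k-1) := by rw [h1]
    _ = n * ((n-1).choose k * (n-k-1)) := by ring
    _ = n * ((n-1) * ((n-2).choose k)) := by rw [h2]
    _ = (n * (n-1)) * ((n-2).choose k) := by ring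

lemma numkeyZ (t k μ : ℤ) (h0k : 0 ≤ k) (h0μ : 0 ≤ μ) (ht : 1 ≤ t) (h : k + 3*t ≤ μ + 1) :
    (μ+1+k) * (μ+k) * t ≤ (k+t) * ((μ+1) * μ) := by
  have hd : (0:ℤ) ≤ μ - (k + 3*t - 1) := by linarith
  nlinarith [mul_nonneg (mul_nonneg h0k h0μ) hd, mul_nonneg h0k hd,
    mul_nonneg (mul_nonneg h0k h0k) hd, mul_nonneg h0k (mul_nonneg h0k h0k),
    mul_nonneg (mul_nonneg h0k h0k) (by linarith : (0:ℤ) ≤ t),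
    mul_nonneg (mul_nonneg h0k (by linarith : (0:ℤ) ≤ t)) hd,
    mul_nonneg (mul_nonneg h0k (by linarith : (0:ℤ) ≤ t)) (by linarith : (0:ℤ) ≤ t),
    mul_nonneg h0k (by linarith : (0:ℤ) ≤ t)]

lemma numkey (t k μ : ℕ) (ht : 1 ≤ t) (h : k + 3*t ≤ μ + 1) :
    (μ+1+k) * (μ+k) * t ≤ (k+t) * ((μ+1) * μ) := by
  zify
  exact numkeyZ t k μ (by positivity) (by positivity) (by exact_mod_cast ht) (by exact_mod_cast h)

/-- the key binomial inequality: `C(n,r-t)·C(r-1,t-1) ≤ C(n-2,r-t)·C(r,t)` for `n ≥ 2r+t`. -/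
lemma keyineq (n r t : ℕ) (ht : 1 ≤ t) (htr : t ≤ r) (hn : 2*r + t ≤ n) :
    n.choose (r-t) * (r-1).choose (t-1) ≤ (n-2).choose (r-t) * r.choose t := by
  set k := r - t with hk
  have hkn : k + 2 ≤ n := by omega
  have hL : n.choose k * ((n - k) * (n - k - 1)) = (n * (n-1)) * ((n-2).choose k) :=
    ladder2 n k hkn
  have hI2 : r * ((r-1).choose (t-1)) = r.choose t * t := by
    have h := Nat.add_one_mul_choose_eq (r-1) (t-1)
    have hs1 : r - 1 + 1 = r := by omega
    have hs2 : t - 1 + 1 = t := by omega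
    rw [hs1, hs2] at h
    exact h
  have hnum : (n * (n-1)) * t ≤ r * ((n - k) * (n - k - 1)) := by
    obtain ⟨μ, hn1, hn2, hnk, hnk1⟩ :
        ∃ μ, n = μ+1+k ∧ n-1 = μ+k ∧ n-k = μ+1 ∧ n-k-1 = μ :=
      ⟨n-k-1, by omega, by omega, by omega, by omega⟩
    rw [hnk1, hnk, hn2, hn1, show r = k + t by omega]
    exact numkey t k μ ht (by omega)
  set A := n.choose k
  set B := (n-2).choose k
  set C1 := r.choose t
  set C2 := (r-1).choose (t-1)
  set a := (n - k) * (n - k - 1) with ha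
  have hpos : 0 < t * a := by
    have h1 : 0 < n - k := by omega
    have h2 : 0 < n - k - 1 := by omega
    exact Nat.mul_pos (by omega) (Nat.mul_pos h1 h2)
  have main : A * C2 * (t * a) ≤ B * C1 * (t * a) := by
    calc A * C2 * (t * a) = (A * a) * (C2 * t) := by ring
      _ = ((n * (n-1)) * B) * (C2 * t) := by rw [hL]
      _ = (B * C2) * ((n * (n-1)) * t) := by ring
      _ ≤ (B * C2) * (r * a) := Nat.mul_le_mul_left _ hnum
      _ = B * (r * C2) * a := by ring
      _ = B * (C1 * t) * a := by rw [hI2]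
      _ = B * C1 * (t * a) := by ring
  exact Nat.le_of_mul_le_mul_right main hpos

lemma choose_mono_left {n k r : ℕ} (hkr : k ≤ r) (h2 : 2*r ≤ n) :
    n.choose k ≤ n.choose r := by
  induction r with
  | zero => have : k = 0 := by omega
            simp [this]
  | succ r ih =>
    rcases Nat.eq_or_lt_of_le hkr with h | h
    · rw [h]
    · have h1 : n.choose k ≤ n.choose r := ih (by omega) (by omega)
      have h2' : n.choose r ≤ n.choose (r+1) :=
        Nat.choose_le_succ_of_lt_half_left (by omega)
      omega

/-- decomposition of the sum over `(s+1)`-subsets of `insert u e`. -/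
lemma sum_powersetCard_insert {α : Type*} [DecidableEq α] (x : Finset α → ℚ)
    (e : Finset α) (u : α) (hu : u ∉ e) (s : ℕ) :
    ∑ S ∈ (insert u e).powersetCard (s+1), x S
      = (∑ S ∈ e.powersetCard (s+1), x S) + ∑ S ∈ e.powersetCard s, x (insert u S) := by
  rw [Finset.powersetCard_succ_insert hu]
  rw [Finset.sum_union]
  · congr 1
    refine Finset.sum_image ?_
    intro B1 h1 B2 h2 heq
    have hB1 : u ∉ B1 := fun h => hu ((Finset.mem_powersetCard.1 h1).1 h)
    have hB2 : u ∉ B2 := fun h => hu ((Finset.mem_powersetCard.1 h2).1 h)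
    have := congrArg (fun A => Finset.erase A u) heq
    simpa [Finset.erase_insert hB1, Finset.erase_insert hB2] using this
  · rw [Finset.disjoint_left]
    intro A hA hA'
    obtain ⟨B, hB, hBA⟩ := Finset.mem_image.1 hA'
    have hnA : u ∉ A := fun h => hu ((Finset.mem_powersetCard.1 hA).1 h)
    exact hnA (hBA ▸ Finset.mem_insert_self u B)

lemma kernel_lemma {α : Type*} [DecidableEq α] (s : ℕ) :
    ∀ (r : ℕ) (V : Finset α) (F : Finset (Finset α)) (x : Finset α → ℚ),
      s ≤ r → 2 * r + s ≤ V.card →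
      F.card * r.choose s < V.card.choose (r - s) →
      (∀ e, e ⊆ V → e.card = r → e ∉ F → ∑ S ∈ e.powersetCard s, x S = 0) →
      ∀ S, S ⊆ V → S.card = s → x S = 0 := by
  induction s with
  | zero =>
    intro r V F x hs hn hcard hker S hSV hScard
    have hcard' : F.card < V.card.choose r := by simpa using hcard
    have hlt : F.card < (V.powersetCard r).card := by
      rw [Finset.card_powersetCard]; exact hcard'
    have hne : ¬ (V.powersetCard r ⊆ F) := fun hsub => absurd (Finset.card_le_card hsub) (by omega)
    obtain ⟨e, he, heF⟩ := Finset.not_subset.1 hne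
    obtain ⟨heV, hecard⟩ := Finset.mem_powersetCard.1 he
    have h0 := hker e heV hecard heF
    rw [Finset.powersetCard_zero, Finset.sum_singleton] at h0
    rw [Finset.card_eq_zero.1 hScard]
    exact h0
  | succ s ih =>
    intro r V F x hs hn hcard hker S hSV hScard
    -- Step 1: x takes the same value when one vertex is exchanged for another
    have hpair : ∀ v w, v ∈ V → w ∈ V → v ≠ w → ∀ S', S' ⊆ V → v ∉ S' → w ∉ S' →
        S'.card = s → x (insert v S') = x (insert w S') := by
      intro v w hv hw hvw
      have hwV : w ∈ V.erase v := Finset.mem_erase.2 ⟨hvw.symm, hw⟩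
      set V' := (V.erase v).erase w with hV'
      have hV'card : V'.card = V.card - 2 := by
        rw [hV', Finset.card_erase_of_mem hwV, Finset.card_erase_of_mem hv]
        omega
      have hvV' : v ∉ V' := fun h => (Finset.mem_erase.1 (Finset.mem_of_mem_erase h)).1 rfl
      have hwV' : w ∉ V' := fun h => (Finset.mem_erase.1 h).1 rfl
      have hV'V : V' ⊆ V := (Finset.erase_subset _ _).trans (Finset.erase_subset _ _)
      set F' := (V'.powersetCard (r-1)).filter
          (fun e' => insert v e' ∈ F ∨ insert w e' ∈ F) with hF'
      -- F' is at most as big as F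
      have hF'card : F'.card ≤ F.card := by
        apply Finset.card_le_card_of_injOn
          (fun e' => if insert v e' ∈ F then insert v e' else insert w e')
        · intro e' he'
          obtain ⟨he'p, he'or⟩ := Finset.mem_filter.1 he'
          by_cases h : insert v e' ∈ F
          · simpa [h] using h
          · simp only [h, if_false]
            tauto
        · intro a ha b hb hab
          obtain ⟨hap, -⟩ := Finset.mem_filter.1 ha
          obtain ⟨hbp, -⟩ := Finset.mem_filter.1 hb
          have hva : v ∉ a := fun h => hvV' ((Finset.mem_powersetCard.1 hap).1 h)
          have hwa : w ∉ a := fun h => hwV' ((Finset.mem_powersetCard.1 hap).1 h)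
          have hvb : v ∉ b := fun h => hvV' ((Finset.mem_powersetCard.1 hbp).1 h)
          have hwb : w ∉ b := fun h => hwV' ((Finset.mem_powersetCard.1 hbp).1 h)
          simp only at hab
          by_cases h1 : insert v a ∈ F <;> by_cases h2 : insert v b ∈ F <;>
            simp only [h1, h2, if_true, if_false] at hab
          · have := congrArg (fun A => Finset.erase A v) hab
            simpa [Finset.erase_insert hva, Finset.erase_insert hvb] using this
          · exfalso
            have : v ∈ insert w b := hab ▸ Finset.mem_insert_self v a
            rcases Finset.mem_insert.1 this with h | h
            · exact hvw h
            · exact hvb h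
          · exfalso
            have : v ∈ insert w a := hab.symm ▸ Finset.mem_insert_self v b
            rcases Finset.mem_insert.1 this with h | h
            · exact hvw h
            · exact hva h
          · have := congrArg (fun A => Finset.erase A w) hab
            simpa [Finset.erase_insert hwa, Finset.erase_insert hwb] using this
      -- the difference function is a kernel vector for the smaller system
      have hzero : ∀ S'', S'' ⊆ V' → S''.card = s →
          x (insert v S'') - x (insert w S'') = 0 := by
        apply ih (r-1) V' F' (fun A => x (insert v A) - x (insert w A))
          (by omega)
          (by omega)
        · -- cardinality hypothesis
          have hC2pos : 0 < (r-1).choose s := Nat.choose_pos (by omega)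
          have hC1pos : 0 < r.choose (s+1) := Nat.choose_pos (by omega)
          have hkey := keyineq V.card r (s+1) (by omega) hs hn
          rw [Nat.succ_sub_one] at hkey
          have step : F'.card * (r-1).choose s * r.choose (s+1)
              < (V.card - 2).choose (r-(s+1)) * r.choose (s+1) := by
            calc F'.card * (r-1).choose s * r.choose (s+1)
                = (F'.card * r.choose (s+1)) * (r-1).choose s := by ring
              _ ≤ (F.card * r.choose (s+1)) * (r-1).choose s := by
                  exact Nat.mul_le_mul_right _ (Nat.mul_le_mul_right _ hF'card)
              _ < V.card.choose (r-(s+1)) * (r-1).choose s := by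
                  exact (Nat.mul_lt_mul_right hC2pos).2 hcard
              _ ≤ (V.card - 2).choose (r-(s+1)) * r.choose (s+1) := hkey
          have hfin := Nat.lt_of_mul_lt_mul_right step
          have : (r - 1) - s = r - (s+1) := by omega
          rw [this, hV'card]
          exact hfin
        · -- kernel hypothesis
          intro e' he'V he'card he'F
          have hve' : v ∉ e' := fun h => hvV' (he'V h)
          have hwe' : w ∉ e' := fun h => hwV' (he'V h)
          have he'mem : e' ∈ V'.powersetCard (r-1) := Finset.mem_powersetCard.2 ⟨he'V, he'card⟩
          have hnF : insert v e' ∉ F ∧ insert w e' ∉ F := by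
            constructor <;> intro h <;>
              exact he'F (Finset.mem_filter.2 ⟨he'mem, by tauto⟩)
          have hcardv : (insert v e').card = r := by
            rw [Finset.card_insert_of_notMem hve', he'card]; omega
          have hcardw : (insert w e').card = r := by
            rw [Finset.card_insert_of_notMem hwe', he'card]; omega
          have hsubv : insert v e' ⊆ V := Finset.insert_subset hv (he'V.trans hV'V)
          have hsubw : insert w e' ⊆ V := Finset.insert_subset hw (he'V.trans hV'V)
          have hv0 := hker (insert v e') hsubv hcardv hnF.1
          have hw0 := hker (insert w e') hsubw hcardw hnF.2
          rw [sum_powersetCard_insert x e' v hve'] at hv0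
          rw [sum_powersetCard_insert x e' w hwe'] at hw0
          rw [Finset.sum_sub_distrib]
          linarith
      intro S' hS'V hvS' hwS' hcS'
      have hS'V' : S' ⊆ V' := by
        rw [hV', Finset.subset_erase, Finset.subset_erase]
        exact ⟨⟨hS'V, hvS'⟩, hwS'⟩
      exact sub_eq_zero.1 (hzero S' hS'V' hcS')
    -- Step 2: x is constant on (s+1)-subsets of V
    have hconst : ∀ (d : ℕ) (A B : Finset α), (A \ B).card ≤ d → A ⊆ V → B ⊆ V →
        A.card = s+1 → B.card = s+1 → x A = x B := by
      intro d
      induction d with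
      | zero =>
        intro A B hd hA hB hcA hcB
        have : A \ B = ∅ := Finset.card_eq_zero.1 (by omega)
        have hAB : A ⊆ B := by
          intro a ha
          by_contra hnb
          exact absurd (Finset.mem_sdiff.2 ⟨ha, hnb⟩) (by simp [this])
        rw [Finset.eq_of_subset_of_card_le hAB (by omega)]
      | succ d ihd =>
        intro A B hd hA hB hcA hcB
        by_cases hAB : A = B
        · rw [hAB]
        · have hABne : (A \ B).Nonempty := by
            rw [Finset.sdiff_nonempty]
            intro hsub
            exact hAB (Finset.eq_of_subset_of_card_le hsub (by omega))
          have hBAne : (B \ A).Nonempty := by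
            rw [Finset.sdiff_nonempty]
            intro hsub
            exact hAB (Finset.eq_of_subset_of_card_le hsub (by omega)).symm
          obtain ⟨v, hv⟩ := hABne
          obtain ⟨w, hw⟩ := hBAne
          obtain ⟨hvA, hvB⟩ := Finset.mem_sdiff.1 hv
          obtain ⟨hwB, hwA⟩ := Finset.mem_sdiff.1 hw
          have hvw : v ≠ w := fun h => hwA (h ▸ hvA)
          have hstep : x A = x (insert w (A.erase v)) := by
            have := hpair v w (hA hvA) (hB hwB) hvw (A.erase v)
              ((Finset.erase_subset _ _).trans hA) (Finset.notMem_erase _ _)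
              (fun h => hwA (Finset.mem_of_mem_erase h))
              (by rw [Finset.card_erase_of_mem hvA, hcA]; omega)
            rwa [Finset.insert_erase hvA] at this
          rw [hstep]
          apply ihd
          · -- (insert w (A.erase v) \ B).card ≤ d
            have hsub : insert w (A.erase v) \ B ⊆ (A \ B).erase v := by
              intro a ha
              obtain ⟨ha1, ha2⟩ := Finset.mem_sdiff.1 ha
              rcases Finset.mem_insert.1 ha1 with h | h
              · exact absurd (h ▸ hwB) ha2
              · exact Finset.mem_erase.2 ⟨(Finset.mem_erase.1 h).1,
                  Finset.mem_sdiff.2 ⟨Finset.mem_of_mem_erase h, ha2⟩⟩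
            have hle := Finset.card_le_card hsub
            have := Finset.card_erase_of_mem hv
            omega
          · exact Finset.insert_subset (hB hwB) ((Finset.erase_subset _ _).trans hA)
          · exact hB
          · rw [Finset.card_insert_of_notMem (fun h => hwA (Finset.mem_of_mem_erase h)),
              Finset.card_erase_of_mem hvA, hcA]
            omega
          · exact hcB
    -- Step 3: find an edge avoiding F and conclude
    have hC1pos : 0 < r.choose (s+1) := Nat.choose_pos hs
    have hFcard : F.card < V.card.choose r := by
      have h1 : F.card ≤ F.card * r.choose (s+1) := Nat.le_mul_of_pos_right _ hC1pos
      have h2 : V.card.choose (r - (s+1)) ≤ V.card.choose r :=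
        choose_mono_left (by omega) (by omega)
      omega
    have hlt : F.card < (V.powersetCard r).card := by
      rw [Finset.card_powersetCard]; exact hFcard
    have hne : ¬ (V.powersetCard r ⊆ F) := fun hsub => absurd (Finset.card_le_card hsub) (by omega)
    obtain ⟨e, he, heF⟩ := Finset.not_subset.1 hne
    obtain ⟨heV, hecard⟩ := Finset.mem_powersetCard.1 he
    have h0 := hker e heV hecard heF
    have hcongr : ∀ A ∈ e.powersetCard (s+1), x A = x S := by
      intro A hA
      obtain ⟨hAe, hAcard⟩ := Finset.mem_powersetCard.1 hA
      exact hconst ((A \ S).card) A S le_rfl (hAe.trans heV) hSV hAcard hScard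
    rw [Finset.sum_congr rfl hcongr, Finset.sum_const, Finset.card_powersetCard, hecard] at h0
    rw [nsmul_eq_mul] at h0
    rcases mul_eq_zero.1 h0 with h | h
    · exact absurd h (Nat.cast_ne_zero.2 (by omega))
    · exact h

theorem stmt5 (n r s : ℕ) (hs : s ≤ r) (hn : 2 * r + s ≤ n)
    (F : Finset (Finset (Fin n))) (hF : F ⊆ (Finset.univ : Finset (Fin n)).powersetCard r)
    (hcard : (F.card : ℚ) < (n.choose (r - s) : ℚ) / (r.choose s : ℚ)) :
    (inclusionMatrix n s (((Finset.univ : Finset (Fin n)).powersetCard r) \ F)).rank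
      = n.choose s := by
  classical
  set E := ((Finset.univ : Finset (Fin n)).powersetCard r) \ F with hE
  -- convert the cardinality hypothesis to ℕ
  have hpos : (0:ℚ) < (r.choose s : ℚ) := by exact_mod_cast Nat.choose_pos hs
  have hcardN : F.card * r.choose s < n.choose (r - s) := by
    have := (lt_div_iff₀ hpos).1 hcard
    exact_mod_cast this
  -- injectivity of the column map
  have hinj : Function.Injective (inclusionMatrix n s E).mulVecLin := by
    rw [← LinearMap.ker_eq_bot, LinearMap.ker_eq_bot']
    intro x hx
    set xt : Finset (Fin n) → ℚ := fun A => if h : A.card = s then x ⟨A, h⟩ else 0 with hxt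
    -- the sum identity
    have hsum : ∀ e : Finset (Fin n),
        ∑ A ∈ e.powersetCard s, xt A
          = ∑ S : {S : Finset (Fin n) // S.card = s},
              (if (S : Finset (Fin n)) ⊆ e then x S else 0) := by
      intro e
      have h3 : (Finset.univ.powersetCard s).filter (fun A => A ⊆ e) = e.powersetCard s := by
        ext A
        simp only [Finset.mem_filter, Finset.mem_powersetCard, Finset.subset_univ, true_and]
        tauto
      have h2 : ∑ A ∈ Finset.univ.powersetCard s, (if A ⊆ e then xt A else 0)
          = ∑ A ∈ e.powersetCard s, xt A := by
        rw [Finset.sum_ite, Finset.sum_const_zero, add_zero, h3]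
      rw [← h2]
      rw [Finset.sum_subtype (p := fun A => A.card = s) (Finset.univ.powersetCard s)
        (by intro A; simp [Finset.mem_powersetCard]) (fun A => if A ⊆ e then xt A else 0)]
      apply Finset.sum_congr rfl
      intro S _
      congr 1
      rw [hxt]
      simp [S.2]
    have hker : ∀ e : Finset (Fin n), e ⊆ Finset.univ → e.card = r → e ∉ F →
        ∑ A ∈ e.powersetCard s, xt A = 0 := by
      intro e heV hecard heF
      have heE : e ∈ E := by
        rw [hE, Finset.mem_sdiff]
        exact ⟨Finset.mem_powersetCard.2 ⟨heV, hecard⟩, heF⟩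
      have h := congrFun hx ⟨e, heE⟩
      rw [hsum e]
      rw [Matrix.mulVecLin_apply] at h
      simp only [Matrix.mulVec, dotProduct, inclusionMatrix, boole_mul, Pi.zero_apply] at h
      convert h using 1
    have hall := kernel_lemma s r Finset.univ F xt hs
      (by simpa using hn)
      (by simpa using hcardN)
      hker
    funext S
    have := hall S (Finset.subset_univ _) S.2
    rw [hxt] at this
    simpa [S.2] using this
  have hrank : (inclusionMatrix n s E).rank
      = Fintype.card {S : Finset (Fin n) // S.card = s} := by
    rw [Matrix.rank, LinearMap.finrank_range_of_inj hinj,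
      Module.finrank_fintype_fun_eq_card]
  rw [hrank, Fintype.card_finset_len, Fintype.card_fin]
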